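/- The systems NEL ∪ {i↑} and SNEL ∪ {∘↓} are strongly equivalent: every derivation from T to R in one system can be transformed into a derivation from T to R in the other. -/
import Mathlib


/-!
Deep-inference presentation of NEL (non-commutative exponential linear logic),
following "A System of Interaction and Structure IV: The Exponentials and Decomposition".
-/

/-- NEL structures: atoms (with a polarity), the unit ∘, par ⅋, tensor ⊗,
seq ◁, and the modalities ? and !. -/
inductive Str : Type
  | atom : ℕ → Bool → Str
  | unit : Str
  | par : Str → Str → Str
  | ten : Str → Str → Str
  | seq : Str → Str → Str
  | quest : Str → Str
  | bang : Str → Str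

namespace Str

/-- De Morgan negation, pushed to the atoms; seq does not swap its arguments. -/
def neg : Str → Str
  | atom n b => atom n (!b)
  | unit => unit
  | par a b => ten (neg a) (neg b)
  | ten a b => par (neg a) (neg b)
  | seq a b => seq (neg a) (neg b)
  | quest a => bang (neg a)
  | bang a => quest (neg a)

/-- The syntactic equivalence `=` on NEL structures: associativity of ⅋, ⊗, ◁,
commutativity of ⅋ and ⊗, unit laws for ∘, and contextual closure. -/
inductive Equiv : Str → Str → Prop
  | refl (a) : Equiv a a
  | symm {a b} : Equiv a b → Equiv b a
  | trans {a b c} : Equiv a b → Equiv b c → Equiv a c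
  | parAssoc (a b c) : Equiv (par (par a b) c) (par a (par b c))
  | tenAssoc (a b c) : Equiv (ten (ten a b) c) (ten a (ten b c))
  | seqAssoc (a b c) : Equiv (seq (seq a b) c) (seq a (seq b c))
  | parComm (a b) : Equiv (par a b) (par b a)
  | tenComm (a b) : Equiv (ten a b) (ten b a)
  | parUnit (a) : Equiv (par unit a) a
  | tenUnit (a) : Equiv (ten unit a) a
  | seqUnitL (a) : Equiv (seq unit a) a
  | seqUnitR (a) : Equiv (seq a unit) a
  | parCongr {a a' b b'} : Equiv a a' → Equiv b b' → Equiv (par a b) (par a' b')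
  | tenCongr {a a' b b'} : Equiv a a' → Equiv b b' → Equiv (ten a b) (ten a' b')
  | seqCongr {a a' b b'} : Equiv a a' → Equiv b b' → Equiv (seq a b) (seq a' b')
  | questCongr {a a'} : Equiv a a' → Equiv (quest a) (quest a')
  | bangCongr {a a'} : Equiv a a' → Equiv (bang a) (bang a')

end Str

/-- Contexts: structures with a hole that is not in the scope of a negation. -/
inductive Ctx : Type
  | hole
  | parL (C : Ctx) (T : Str)
  | parR (T : Str) (C : Ctx)
  | tenL (C : Ctx) (T : Str)
  | tenR (T : Str) (C : Ctx)
  | seqL (C : Ctx) (T : Str)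
  | seqR (T : Str) (C : Ctx)
  | quest (C : Ctx)
  | bang (C : Ctx)

/-- Plugging a structure into the hole of a context. -/
def Ctx.fill : Ctx → Str → Str
  | .hole, R => R
  | .parL C T, R => .par (C.fill R) T
  | .parR T C, R => .par T (C.fill R)
  | .tenL C T, R => .ten (C.fill R) T
  | .tenR T C, R => .ten T (C.fill R)
  | .seqL C T, R => .seq (C.fill R) T
  | .seqR T C, R => .seq T (C.fill R)
  | .quest C, R => .quest (C.fill R)
  | .bang C, R => .bang (C.fill R)

/-- A set of (instances of) inference rules, given as a relation
from premise to conclusion. -/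
abbrev Rules := Str → Str → Prop

/-- An instance of a rule of `r` applied deep inside a context. -/
def DeepStep (r : Rules) (P Q : Str) : Prop :=
  ∃ (C : Ctx) (a b : Str), r a b ∧ P = C.fill a ∧ Q = C.fill b

/-- A single inference step: a deep rule application, modulo the
syntactic equivalence on premise and conclusion. -/
def Step (r : Rules) (P Q : Str) : Prop :=
  ∃ P' Q', Str.Equiv P P' ∧ DeepStep r P' Q' ∧ Str.Equiv Q' Q

/-- A derivation in the system `r` from premise `T` (top) to conclusion `R`
(bottom): a finite chain of inference steps modulo syntactic equivalence. -/
def Deriv (r : Rules) (T R : Str) : Prop :=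
  Str.Equiv T R ∨ Relation.TransGen (Step r) T R

/- The rules of SNEL, written premise → conclusion (read downwards). -/

/-- atomic interaction ai↓ : S{∘} → S⟨a ⅋ ā⟩ -/
inductive aiDown : Str → Str → Prop
  | mk (n : ℕ) (b : Bool) : aiDown .unit (.par (.atom n b) (.atom n (!b)))

/-- atomic cut ai↑ : S⟨a ⊗ ā⟩ → S{∘} -/
inductive aiUp : Str → Str → Prop
  | mk (n : ℕ) (b : Bool) : aiUp (.ten (.atom n b) (.atom n (!b))) .unit

/-- switch s : S⟨(R ⅋ U) ⊗ T⟩ → S⟨(R ⊗ T) ⅋ U⟩ -/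
inductive sw : Str → Str → Prop
  | mk (R U T : Str) : sw (.ten (.par R U) T) (.par (.ten R T) U)

/-- seq q↓ : S⟨(R ◁ T) ⅋ (U ◁ V)⟩ → S⟨(R ⅋ U) ◁ (T ⅋ V)⟩ -/
inductive qDown : Str → Str → Prop
  | mk (R T U V : Str) :
      qDown (.par (.seq R T) (.seq U V)) (.seq (.par R U) (.par T V))

/-- coseq q↑ : S⟨(R ⊗ T) ◁ (U ⊗ V)⟩ → S⟨(R ◁ U) ⊗ (T ◁ V)⟩ -/
inductive qUp : Str → Str → Prop
  | mk (R T U V : Str) :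
      qUp (.seq (.ten R T) (.ten U V)) (.ten (.seq R U) (.seq T V))

/-- promotion p↓ : S{!(R ⅋ T)} → S⟨!R ⅋ ?T⟩ -/
inductive pDown : Str → Str → Prop
  | mk (R T : Str) : pDown (.bang (.par R T)) (.par (.bang R) (.quest T))

/-- copromotion p↑ : S⟨?T ⊗ !R⟩ → S{?(T ⊗ R)} -/
inductive pUp : Str → Str → Prop
  | mk (T R : Str) : pUp (.ten (.quest T) (.bang R)) (.quest (.ten T R))

/-- empty e↓ : S{∘} → S{!∘} -/
inductive eDown : Str → Str → Prop
  | mk : eDown .unit (.bang .unit)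

/-- coempty e↑ : S{?∘} → S{∘} -/
inductive eUp : Str → Str → Prop
  | mk : eUp (.quest .unit) .unit

/-- weakening w↓ : S{∘} → S{?R} -/
inductive wDown : Str → Str → Prop
  | mk (R : Str) : wDown .unit (.quest R)

/-- coweakening w↑ : S{!R} → S{∘} -/
inductive wUp : Str → Str → Prop
  | mk (R : Str) : wUp (.bang R) .unit

/-- absorption b↓ : S⟨?R ⅋ R⟩ → S{?R} -/
inductive bDown : Str → Str → Prop
  | mk (R : Str) : bDown (.par (.quest R) R) (.quest R)

/-- coabsorption b↑ : S{!R} → S⟨!R ⊗ R⟩ -/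
inductive bUp : Str → Str → Prop
  | mk (R : Str) : bUp (.bang R) (.ten (.bang R) R)

/-- digging g↓ : S{??R} → S{?R} -/
inductive gDown : Str → Str → Prop
  | mk (R : Str) : gDown (.quest (.quest R)) (.quest R)

/-- codigging g↑ : S{!R} → S{!!R} -/
inductive gUp : Str → Str → Prop
  | mk (R : Str) : gUp (.bang R) (.bang (.bang R))

/-- general interaction i↓ : S{∘} → S⟨R ⅋ R̄⟩ -/
inductive iDown : Str → Str → Prop
  | mk (R : Str) : iDown .unit (.par R R.neg)

/-- general cut i↑ : S⟨R ⊗ R̄⟩ → S{∘} -/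
inductive iUp : Str → Str → Prop
  | mk (R : Str) : iUp (.ten R R.neg) .unit

/-- The unit axiom ∘↓ of NEL.  It has no premise; within a derivation
(which always has a premise) it can therefore only act vacuously, which
we model by the trivial rewrite ∘ → ∘. -/
inductive unitAx : Str → Str → Prop
  | mk : unitAx .unit .unit

/-- System SNEL. -/
def snel : Rules :=
  aiDown ⊔ aiUp ⊔ sw ⊔ qDown ⊔ qUp ⊔ pDown ⊔ pUp ⊔ eDown ⊔ eUp ⊔
    wDown ⊔ wUp ⊔ bDown ⊔ bUp ⊔ gDown ⊔ gUp

/-- The down fragment of SNEL together with the unit axiom: system NEL. -/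
def nel : Rules :=
  unitAx ⊔ aiDown ⊔ sw ⊔ qDown ⊔ pDown ⊔ eDown ⊔ wDown ⊔ bDown ⊔ gDown

/-- The system {s, q↓, q↑}. -/
def swq : Rules := sw ⊔ qDown ⊔ qUp

/-- The hard core SNELh = {s, q↓, q↑, p↓, p↑}. -/
def snelh : Rules := sw ⊔ qDown ⊔ qUp ⊔ pDown ⊔ pUp

/-! ### Infrastructure -/

open Str

theorem Str.negNeg : ∀ a : Str, a.neg.neg = a
  | atom n b => by simp [neg]
  | unit => rfl
  | par a b => by simp [neg, negNeg a, negNeg b]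
  | ten a b => by simp [neg, negNeg a, negNeg b]
  | seq a b => by simp [neg, negNeg a, negNeg b]
  | quest a => by simp [neg, negNeg a]
  | bang a => by simp [neg, negNeg a]

/-- Composition of contexts. -/
def Ctx.comp : Ctx → Ctx → Ctx
  | .hole, D => D
  | .parL C T, D => .parL (C.comp D) T
  | .parR T C, D => .parR T (C.comp D)
  | .tenL C T, D => .tenL (C.comp D) T
  | .tenR T C, D => .tenR T (C.comp D)
  | .seqL C T, D => .seqL (C.comp D) T
  | .seqR T C, D => .seqR T (C.comp D)
  | .quest C, D => .quest (C.comp D)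
  | .bang C, D => .bang (C.comp D)

theorem Ctx.fill_comp (C D : Ctx) (R : Str) :
    (C.comp D).fill R = C.fill (D.fill R) := by
  induction C <;> simp [Ctx.comp, Ctx.fill, *]

theorem Str.Equiv.fill (C : Ctx) {a b : Str} (h : Str.Equiv a b) :
    Str.Equiv (C.fill a) (C.fill b) := by
  induction C <;>
    simp only [Ctx.fill] <;>
    first
    | exact h
    | exact Str.Equiv.parCongr ‹_› (Str.Equiv.refl _)
    | exact Str.Equiv.parCongr (Str.Equiv.refl _) ‹_›
    | exact Str.Equiv.tenCongr ‹_› (Str.Equiv.refl _)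
    | exact Str.Equiv.tenCongr (Str.Equiv.refl _) ‹_›
    | exact Str.Equiv.seqCongr ‹_› (Str.Equiv.refl _)
    | exact Str.Equiv.seqCongr (Str.Equiv.refl _) ‹_›
    | exact Str.Equiv.questCongr ‹_›
    | exact Str.Equiv.bangCongr ‹_›

namespace Deriv

theorem of_equiv {r : Rules} {a b : Str} (h : Str.Equiv a b) : Deriv r a b :=
  Or.inl h

theorem step_equiv_left {r : Rules} {a a' b : Str} (e : Str.Equiv a a')
    (h : Step r a' b) : Step r a b := by
  obtain ⟨P, Q, e₁, d, e₂⟩ := h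
  exact ⟨P, Q, e.trans e₁, d, e₂⟩

theorem step_equiv_right {r : Rules} {a b b' : Str} (h : Step r a b')
    (e : Str.Equiv b' b) : Step r a b := by
  obtain ⟨P, Q, e₁, d, e₂⟩ := h
  exact ⟨P, Q, e₁, d, e₂.trans e⟩

theorem trans {r : Rules} {a b c : Str} (h₁ : Deriv r a b) (h₂ : Deriv r b c) :
    Deriv r a c := by
  rcases h₁ with h₁ | h₁ <;> rcases h₂ with h₂ | h₂
  · exact Or.inl (h₁.trans h₂)
  · obtain ⟨x, hx, hrest⟩ := Relation.TransGen.head'_iff.mp h₂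
    exact Or.inr (Relation.TransGen.head' (step_equiv_left h₁ hx) hrest)
  · obtain ⟨x, hrest, hx⟩ := Relation.TransGen.tail'_iff.mp h₁
    exact Or.inr (Relation.TransGen.tail' hrest (step_equiv_right hx h₂))
  · exact Or.inr (h₁.trans h₂)

theorem single {r : Rules} {a b : Str} (h : r a b) : Deriv r a b :=
  Or.inr (.single ⟨a, b, Str.Equiv.refl a, ⟨.hole, a, b, h, Eq.refl _, Eq.refl _⟩,
    Str.Equiv.refl b⟩)

theorem equiv_left {r : Rules} {a a' b : Str} (e : Str.Equiv a a')
    (h : Deriv r a' b) : Deriv r a b := (of_equiv e).trans h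

theorem equiv_right {r : Rules} {a b b' : Str} (h : Deriv r a b')
    (e : Str.Equiv b' b) : Deriv r a b := h.trans (of_equiv e)

theorem ctx {r : Rules} (C : Ctx) {a b : Str} (h : Deriv r a b) :
    Deriv r (C.fill a) (C.fill b) := by
  rcases h with h | h
  · exact Or.inl (h.fill C)
  · right
    refine h.head_induction_on (fun {x} hs => ?_) (fun {x y} hs _ ih => ?_)
    · obtain ⟨P, Q, e₁, ⟨D, u, v, hr, hP, hQ⟩, e₂⟩ := hs
      exact .single ⟨C.fill P, C.fill Q, e₁.fill C,
        ⟨C.comp D, u, v, hr, by simp [Ctx.fill_comp, hP], by simp [Ctx.fill_comp, hQ]⟩,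
        e₂.fill C⟩
    · obtain ⟨P, Q, e₁, ⟨D, u, v, hr, hP, hQ⟩, e₂⟩ := hs
      exact .head ⟨C.fill P, C.fill Q, e₁.fill C,
        ⟨C.comp D, u, v, hr, by simp [Ctx.fill_comp, hP], by simp [Ctx.fill_comp, hQ]⟩,
        e₂.fill C⟩ ih

/-- Simulation: if every rule instance of `r` is derivable in `r'`,
then every derivation in `r` can be done in `r'`. -/
theorem simulate {r r' : Rules} (h : ∀ a b, r a b → Deriv r' a b)
    {T R : Str} (d : Deriv r T R) : Deriv r' T R := by
  rcases d with d | d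
  · exact Or.inl d
  · induction d with
    | single hs =>
        obtain ⟨P, Q, e₁, ⟨C, u, v, hr, hP, hQ⟩, e₂⟩ := hs
        subst hP hQ
        exact ((of_equiv e₁).trans (ctx C (h _ _ hr))).trans (of_equiv e₂)
    | tail _ hs ih =>
        obtain ⟨P, Q, e₁, ⟨C, u, v, hr, hP, hQ⟩, e₂⟩ := hs
        subst hP hQ
        exact ih.trans (((of_equiv e₁).trans (ctx C (h _ _ hr))).trans (of_equiv e₂))

theorem mono {r r' : Rules} (hle : ∀ a b, r a b → r' a b) {T R : Str}
    (d : Deriv r T R) : Deriv r' T R :=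
  d.simulate fun a b h => single (hle a b h)

end Deriv

/-! Membership of rules in the systems. -/

theorem Rules.sup_iff (r s : Rules) (a b : Str) :
    (r ⊔ s) a b ↔ r a b ∨ s a b := by
  simp [Pi.sup_apply, sup_Prop_eq]

theorem nel_mem {a b : Str}
    (h : unitAx a b ∨ aiDown a b ∨ sw a b ∨ qDown a b ∨ pDown a b ∨
      eDown a b ∨ wDown a b ∨ bDown a b ∨ gDown a b) : nel a b := by
  simp only [nel, Pi.sup_apply, sup_Prop_eq]
  tauto

theorem snel_mem {a b : Str}
    (h : aiDown a b ∨ aiUp a b ∨ sw a b ∨ qDown a b ∨ qUp a b ∨ pDown a b ∨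
      pUp a b ∨ eDown a b ∨ eUp a b ∨ wDown a b ∨ wUp a b ∨ bDown a b ∨
      bUp a b ∨ gDown a b ∨ gUp a b) : snel a b := by
  simp only [snel, Pi.sup_apply, sup_Prop_eq]
  tauto

theorem nel_cases {a b : Str} (h : nel a b) :
    unitAx a b ∨ aiDown a b ∨ sw a b ∨ qDown a b ∨ pDown a b ∨
      eDown a b ∨ wDown a b ∨ bDown a b ∨ gDown a b := by
  simpa only [nel, Pi.sup_apply, sup_Prop_eq, or_assoc] using h

theorem snel_cases {a b : Str} (h : snel a b) :
    aiDown a b ∨ aiUp a b ∨ sw a b ∨ qDown a b ∨ qUp a b ∨ pDown a b ∨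
      pUp a b ∨ eDown a b ∨ eUp a b ∨ wDown a b ∨ wUp a b ∨ bDown a b ∨
      bUp a b ∨ gDown a b ∨ gUp a b := by
  simpa only [snel, Pi.sup_apply, sup_Prop_eq, or_assoc] using h

/-! Convenient equivalence combinators. -/

namespace Str.Equiv

theorem parUnitR (a : Str) : Str.Equiv (par a unit) a :=
  (parComm a unit).trans (parUnit a)

theorem tenUnitR (a : Str) : Str.Equiv (ten a unit) a :=
  (tenComm a unit).trans (tenUnit a)

/-- `(a ⅋ b) ⅋ (c ⅋ d) ≡ (a ⅋ c) ⅋ (b ⅋ d)` -/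
theorem parSwap (a b c d : Str) :
    Str.Equiv (par (par a b) (par c d)) (par (par a c) (par b d)) :=
  (parAssoc a b (par c d)).trans <|
    (parCongr (refl a) ((symm (parAssoc b c d)).trans <|
      (parCongr (parComm b c) (refl d)).trans (parAssoc c b d))).trans <|
    symm (parAssoc a c (par b d))

/-- `(a ⊗ b) ⊗ (c ⊗ d) ≡ (a ⊗ c) ⊗ (b ⊗ d)` -/
theorem tenSwap (a b c d : Str) :
    Str.Equiv (ten (ten a b) (ten c d)) (ten (ten a c) (ten b d)) :=
  (tenAssoc a b (ten c d)).trans <|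
    (tenCongr (refl a) ((symm (tenAssoc b c d)).trans <|
      (tenCongr (tenComm b c) (refl d)).trans (tenAssoc c b d))).trans <|
    symm (tenAssoc a c (ten b d))

end Str.Equiv

/-! ### Auxiliary derivations -/

/-- `a ⅋ b → a ◁ b` using q↓ and the units. -/
theorem par_to_seq (a b : Str) : Deriv nel (par a b) (seq a b) := by
  refine Deriv.equiv_left (Str.Equiv.parCongr
    (Str.Equiv.symm (Str.Equiv.seqUnitR a)) (Str.Equiv.symm (Str.Equiv.seqUnitL b))) ?_
  refine Deriv.equiv_right (Deriv.single (nel_mem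
    (Or.inr (Or.inr (Or.inr (Or.inl (qDown.mk a unit unit b))))))) ?_
  exact Str.Equiv.seqCongr (Str.Equiv.parUnitR a) (Str.Equiv.parUnit b)

/-- `a ◁ b → a ⊗ b` using q↑ and the units. -/
theorem seq_to_ten (a b : Str) : Deriv snel (seq a b) (ten a b) := by
  refine Deriv.equiv_left (Str.Equiv.seqCongr
    (Str.Equiv.symm (Str.Equiv.tenUnitR a)) (Str.Equiv.symm (Str.Equiv.tenUnit b))) ?_
  refine Deriv.equiv_right (Deriv.single (snel_mem
    (Or.inr (Or.inr (Or.inr (Or.inr (Or.inl (qUp.mk a unit unit b)))))))) ?_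
  exact Str.Equiv.tenCongr (Str.Equiv.seqUnitR a) (Str.Equiv.seqUnitL b)

/-! ### General interaction i↓ is derivable in NEL. -/

theorem iDown_derivable : ∀ R : Str, Deriv nel Str.unit (par R R.neg)
  | atom n b => Deriv.single (nel_mem (Or.inr (Or.inl (aiDown.mk n b))))
  | unit => Deriv.of_equiv (Str.Equiv.symm (Str.Equiv.parUnit unit))
  | par a b => by
      -- ∘ → a ⅋ ā → a ⅋ ((b ⅋ b̄) ⊗ ā) → a ⅋ ((b̄ ⊗ ā) ⅋ b) ≡ (a ⅋ b) ⅋ (ā ⊗ b̄)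
      refine (iDown_derivable a).trans (Deriv.equiv_right
        (Deriv.ctx (.parR a .hole) (a := a.neg) (b := par (ten b.neg a.neg) b) ?_) ?_)
      · refine Deriv.equiv_left (Str.Equiv.symm (Str.Equiv.tenUnit a.neg)) ?_
        refine (Deriv.ctx (.tenL .hole a.neg) (iDown_derivable b)).trans ?_
        refine Deriv.equiv_left (Str.Equiv.tenCongr
          (Str.Equiv.parComm b b.neg) (Str.Equiv.refl a.neg)) ?_
        exact Deriv.single (nel_mem (Or.inr (Or.inr (Or.inl (sw.mk b.neg b a.neg)))))
      · show Str.Equiv (par a (par (ten b.neg a.neg) b)) (par (par a b) (ten a.neg b.neg))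
        exact (Str.Equiv.parCongr (Str.Equiv.refl a)
            (Str.Equiv.parComm _ _)).trans <|
          (Str.Equiv.symm (Str.Equiv.parAssoc a b (ten b.neg a.neg))).trans <|
          Str.Equiv.parCongr (Str.Equiv.refl _) (Str.Equiv.tenComm _ _)
  | ten a b => by
      -- ∘ → b ⅋ b̄ → ((a ⅋ ā) ⊗ b) ⅋ b̄ → ((a ⊗ b) ⅋ ā) ⅋ b̄ ≡ (a ⊗ b) ⅋ (ā ⅋ b̄)
      refine (iDown_derivable b).trans (Deriv.equiv_right
        (Deriv.ctx (.parL .hole b.neg) (a := b) (b := par (ten a b) a.neg) ?_) ?_)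
      · refine Deriv.equiv_left (Str.Equiv.symm (Str.Equiv.tenUnit b)) ?_
        refine (Deriv.ctx (.tenL .hole b) (iDown_derivable a)).trans ?_
        exact Deriv.single (nel_mem (Or.inr (Or.inr (Or.inl (sw.mk a a.neg b)))))
      · exact Str.Equiv.parAssoc (ten a b) a.neg b.neg
  | seq a b => by
      -- ∘ ≡ ∘ ⅋ ∘ → (a ⅋ ā) ⅋ (b ⅋ b̄) ≡ (a ⅋ b) ⅋ (ā ⅋ b̄) → (a ◁ b) ⅋ (ā ◁ b̄)
      refine Deriv.equiv_left (Str.Equiv.symm (Str.Equiv.parUnit unit)) ?_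
      refine (Deriv.ctx (.parL .hole unit) (iDown_derivable a)).trans ?_
      refine (Deriv.ctx (.parR (par a a.neg) .hole) (iDown_derivable b)).trans ?_
      refine Deriv.equiv_left (Str.Equiv.parSwap a a.neg b b.neg) ?_
      refine (Deriv.ctx (.parL .hole (par a.neg b.neg)) (par_to_seq a b)).trans ?_
      exact Deriv.ctx (.parR (seq a b) .hole) (par_to_seq a.neg b.neg)
  | quest a => by
      -- ∘ → !∘ → !(a ⅋ ā) ≡ !(ā ⅋ a) → !ā ⅋ ?a ≡ ?a ⅋ !ā
      refine (Deriv.single (nel_mem (Or.inr (Or.inr (Or.inr (Or.inr (Or.inr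
        (Or.inl eDown.mk)))))))).trans ?_
      refine (Deriv.ctx (.bang .hole) (iDown_derivable a)).trans ?_
      refine Deriv.equiv_left (Str.Equiv.bangCongr (Str.Equiv.parComm a a.neg)) ?_
      refine Deriv.equiv_right (Deriv.single (nel_mem (Or.inr (Or.inr (Or.inr
        (Or.inr (Or.inl (pDown.mk a.neg a)))))))) ?_
      exact Str.Equiv.parComm _ _
  | bang a => by
      -- ∘ → !∘ → !(a ⅋ ā) → !a ⅋ ?ā
      refine (Deriv.single (nel_mem (Or.inr (Or.inr (Or.inr (Or.inr (Or.inr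
        (Or.inl eDown.mk)))))))).trans ?_
      refine (Deriv.ctx (.bang .hole) (iDown_derivable a)).trans ?_
      exact Deriv.single (nel_mem (Or.inr (Or.inr (Or.inr (Or.inr (Or.inl
        (pDown.mk a a.neg)))))))

/-! ### General cut i↑ is derivable in SNEL. -/

theorem iUp_derivable : ∀ R : Str, Deriv snel (ten R R.neg) Str.unit
  | atom n b => Deriv.single (snel_mem (Or.inr (Or.inl (aiUp.mk n b))))
  | unit => Deriv.of_equiv (Str.Equiv.tenUnit unit)
  | par a b => by
      -- (a⅋b)⊗(ā⊗b̄) ≡ ((a⅋b)⊗ā)⊗b̄ → ((a⊗ā)⅋b)⊗b̄ → (∘⅋b)⊗b̄ ≡ b⊗b̄ → ∘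
      refine Deriv.equiv_left (Str.Equiv.symm
        (Str.Equiv.tenAssoc (par a b) a.neg b.neg)) ?_
      refine (Deriv.ctx (.tenL .hole b.neg)
        (Deriv.single (snel_mem (Or.inr (Or.inr (Or.inl (sw.mk a b a.neg))))))).trans ?_
      refine (Deriv.ctx (.tenL (.parL .hole b) b.neg) (iUp_derivable a)).trans ?_
      refine Deriv.equiv_left (Str.Equiv.tenCongr (Str.Equiv.parUnit b)
        (Str.Equiv.refl b.neg)) ?_
      exact iUp_derivable b
  | ten a b => by
      -- (a⊗b)⊗(ā⅋b̄) via seq?  Simpler: ≡ (ā⅋b̄)⊗(a⊗b) ≡ ((ā⅋b̄)⊗a)⊗b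
      -- → ((ā⊗a)⅋b̄)⊗b → (∘⅋b̄)⊗b ≡ b̄⊗b ≡ b⊗b̄ → ∘
      refine Deriv.equiv_left ((Str.Equiv.tenComm (ten a b) (par a.neg b.neg)).trans
        (Str.Equiv.symm (Str.Equiv.tenAssoc (par a.neg b.neg) a b))) ?_
      refine (Deriv.ctx (.tenL .hole b)
        (Deriv.single (snel_mem (Or.inr (Or.inr (Or.inl (sw.mk a.neg b.neg a))))))).trans ?_
      refine Deriv.equiv_left (Str.Equiv.tenCongr (Str.Equiv.parCongr
        (Str.Equiv.tenComm a.neg a) (Str.Equiv.refl b.neg)) (Str.Equiv.refl b)) ?_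
      refine (Deriv.ctx (.tenL (.parL .hole b.neg) b) (iUp_derivable a)).trans ?_
      refine Deriv.equiv_left ((Str.Equiv.tenCongr (Str.Equiv.parUnit b.neg)
        (Str.Equiv.refl b)).trans (Str.Equiv.tenComm b.neg b)) ?_
      exact iUp_derivable b
  | seq a b => by
      -- (a◁b)⊗(ā◁b̄) → (a⊗b)⊗(ā⊗b̄) ≡ (a⊗ā)⊗(b⊗b̄) → ∘⊗(b⊗b̄) ≡ b⊗b̄ → ∘
      refine (Deriv.ctx (.tenL .hole (seq a.neg b.neg)) (seq_to_ten a b)).trans ?_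
      refine (Deriv.ctx (.tenR (ten a b) .hole) (seq_to_ten a.neg b.neg)).trans ?_
      refine Deriv.equiv_left (Str.Equiv.tenSwap a b a.neg b.neg) ?_
      refine (Deriv.ctx (.tenL .hole (ten b b.neg)) (iUp_derivable a)).trans ?_
      refine Deriv.equiv_left (Str.Equiv.tenUnit (ten b b.neg)) ?_
      exact iUp_derivable b
  | quest a => by
      -- ?a ⊗ !ā → ?(a ⊗ ā) → ?∘ → ∘
      refine (Deriv.single (snel_mem (Or.inr (Or.inr (Or.inr (Or.inr (Or.inr
        (Or.inr (Or.inl (pUp.mk a a.neg)))))))))).trans ?_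
      refine (Deriv.ctx (.quest .hole) (iUp_derivable a)).trans ?_
      exact Deriv.single (snel_mem (Or.inr (Or.inr (Or.inr (Or.inr (Or.inr
        (Or.inr (Or.inr (Or.inr (Or.inl eUp.mk))))))))))
  | bang a => by
      -- !a ⊗ ?ā ≡ ?ā ⊗ !a → ?(ā ⊗ a) ≡ ?(a ⊗ ā) → ?∘ → ∘
      refine Deriv.equiv_left (Str.Equiv.tenComm (bang a) (quest a.neg)) ?_
      refine (Deriv.single (snel_mem (Or.inr (Or.inr (Or.inr (Or.inr (Or.inr
        (Or.inr (Or.inl (pUp.mk a.neg a)))))))))).trans ?_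
      refine Deriv.equiv_left (Str.Equiv.questCongr (Str.Equiv.tenComm a.neg a)) ?_
      refine (Deriv.ctx (.quest .hole) (iUp_derivable a)).trans ?_
      exact Deriv.single (snel_mem (Or.inr (Or.inr (Or.inr (Or.inr (Or.inr
        (Or.inr (Or.inr (Or.inr (Or.inl eUp.mk))))))))))

/-! ### Simulation of up rules in NEL ∪ {i↑} -/

theorem nel_le_sup {a b : Str} (h : nel a b) : (nel ⊔ iUp) a b :=
  (Rules.sup_iff _ _ a b).mpr (Or.inl h)

/-- Generic scheme: if the "dual" rewriting `B̄ → Ā` is derivable in NEL, then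
`A → B` is derivable in NEL ∪ {i↑}:
`A ≡ A⊗∘ → A⊗(B ⅋ B̄) ≡ (B̄ ⅋ B)⊗A → (B̄⊗A) ⅋ B → (Ā⊗A) ⅋ B ≡ (A⊗Ā) ⅋ B → ∘ ⅋ B ≡ B`. -/
theorem up_simulation {A B : Str} (h : Deriv nel B.neg A.neg) :
    Deriv (nel ⊔ iUp) A B := by
  refine Deriv.equiv_left (Str.Equiv.symm (Str.Equiv.tenUnitR A)) ?_
  refine (Deriv.ctx (.tenR A .hole) ((iDown_derivable B).mono
    fun a b => nel_le_sup)).trans ?_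
  refine Deriv.equiv_left ((Str.Equiv.tenComm A (par B B.neg)).trans
    (Str.Equiv.tenCongr (Str.Equiv.parComm B B.neg) (Str.Equiv.refl A))) ?_
  refine (Deriv.single (nel_le_sup (nel_mem (Or.inr (Or.inr (Or.inl
    (sw.mk B.neg B A))))))).trans ?_
  refine (Deriv.ctx (.parL (.tenL .hole A) B) (h.mono fun a b => nel_le_sup)).trans ?_
  refine Deriv.equiv_left (Str.Equiv.parCongr (Str.Equiv.tenComm A.neg A)
    (Str.Equiv.refl B)) ?_
  refine (Deriv.ctx (.parL .hole B) (Deriv.single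
    ((Rules.sup_iff nel iUp _ _).mpr (Or.inr (iUp.mk A))))).trans ?_
  exact Deriv.of_equiv (Str.Equiv.parUnit B)

/-! ### The main theorem -/

/-- The systems NEL ∪ {i↑} and SNEL ∪ {∘↓} are strongly
equivalent: every derivation from T to R in one system can be transformed
into a derivation from T to R in the other. -/
theorem nel_cut_strongly_equivalent_snel :
    ∀ T R : Str, Deriv (nel ⊔ iUp) T R ↔ Deriv (snel ⊔ unitAx) T R := by
  intro T R
  constructor
  · -- NEL ∪ {i↑} ⟶ SNEL ∪ {∘↓}
    refine Deriv.simulate (fun a b h => ?_)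
    rcases (Rules.sup_iff nel iUp a b).mp h with h | h
    · rcases nel_cases h with h | h | h | h | h | h | h | h | h
      · exact Deriv.single ((Rules.sup_iff snel unitAx a b).mpr (Or.inr h))
      all_goals exact Deriv.single ((Rules.sup_iff snel unitAx a b).mpr
        (Or.inl (snel_mem (by tauto))))
    · rcases h with ⟨S⟩
      exact (iUp_derivable S).mono fun a b h =>
        (Rules.sup_iff snel unitAx a b).mpr (Or.inl h)
  · -- SNEL ∪ {∘↓} ⟶ NEL ∪ {i↑}
    refine Deriv.simulate (fun a b h => ?_)
    rcases (Rules.sup_iff snel unitAx a b).mp h with h | h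
    · rcases snel_cases h with h | h | h | h | h | h | h | h | h | h | h | h | h | h | h
      -- ai↓ : in NEL
      · exact Deriv.single (nel_le_sup (nel_mem (by tauto)))
      -- ai↑ : instance of i↑
      · rcases h with ⟨n, c⟩
        exact Deriv.single ((Rules.sup_iff nel iUp _ _).mpr (Or.inr (iUp.mk (atom n c))))
      -- s : in NEL
      · exact Deriv.single (nel_le_sup (nel_mem (by tauto)))
      -- q↓ : in NEL
      · exact Deriv.single (nel_le_sup (nel_mem (by tauto)))
      -- q↑ : dual of q↓
      · rcases h with ⟨R', T', U', V'⟩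
        exact up_simulation (Deriv.single (nel_mem
          (Or.inr (Or.inr (Or.inr (Or.inl (qDown.mk R'.neg U'.neg T'.neg V'.neg)))))))
      -- p↓ : in NEL
      · exact Deriv.single (nel_le_sup (nel_mem (by tauto)))
      -- p↑ : dual of p↓
      · rcases h with ⟨T', R'⟩
        exact up_simulation (Deriv.single (nel_mem
          (Or.inr (Or.inr (Or.inr (Or.inr (Or.inl (pDown.mk T'.neg R'.neg))))))))
      -- e↓ : in NEL
      · exact Deriv.single (nel_le_sup (nel_mem (by tauto)))
      -- e↑ : dual of e↓
      · rcases h with ⟨⟩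
        exact up_simulation (Deriv.single (nel_mem (by tauto)))
      -- w↓ : in NEL
      · exact Deriv.single (nel_le_sup (nel_mem (by tauto)))
      -- w↑ : dual of w↓
      · rcases h with ⟨R'⟩
        exact up_simulation (Deriv.single (nel_mem
          (Or.inr (Or.inr (Or.inr (Or.inr (Or.inr (Or.inr (Or.inl
            (wDown.mk R'.neg))))))))))
      -- b↓ : in NEL
      · exact Deriv.single (nel_le_sup (nel_mem (by tauto)))
      -- b↑ : dual of b↓
      · rcases h with ⟨R'⟩
        exact up_simulation (Deriv.single (nel_mem
          (Or.inr (Or.inr (Or.inr (Or.inr (Or.inr (Or.inr (Or.inr (Or.inl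
            (bDown.mk R'.neg)))))))))))
      -- g↓ : in NEL
      · exact Deriv.single (nel_le_sup (nel_mem (by tauto)))
      -- g↑ : dual of g↓
      · rcases h with ⟨R'⟩
        exact up_simulation (Deriv.single (nel_mem
          (Or.inr (Or.inr (Or.inr (Or.inr (Or.inr (Or.inr (Or.inr (Or.inr
            (gDown.mk R'.neg)))))))))))
    · rcases h with ⟨⟩
      exact Deriv.single (nel_le_sup (nel_mem (Or.inl unitAx.mk)))
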